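/- There exist constants α ∈ (0, 1/2), c > 0 and n₀ such that for every n = 2^k ≥ n₀ and every ε with n^{−α} ≤ ε ≤ α, the (Id, F)-preconditioned quasi-entropy of the Fourier ε-perturbation satisfies Φ_{Id,F}(Id + εF) ≥ c ε n log₂ n, where F is the n×n Walsh–Hadamard matrix. -/

import Mathlib

open Matrix Finset

noncomputable section

/-- Walsh–Hadamard matrix of size `2^k`. -/
def WH (k : ℕ) : Matrix (Fin (2^k)) (Fin (2^k)) ℝ := fun i j =>
  ((-1 : ℝ) ^ (∑ b ∈ Finset.range k, ((i.val >>> b) % 2) * ((j.val >>> b) % 2))) /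
    Real.sqrt (2^k)

/-- Quasi-entropy `Φ(M)` (base-2 logs, `0·log 0 = 0`). -/
def qent {n : ℕ} (M : Matrix (Fin n) (Fin n) ℝ) : ℝ :=
  -∑ i, ∑ j, (M i j * M⁻¹ᵀ i j) * Real.logb 2 |M i j * M⁻¹ᵀ i j|

/-- Preconditioned quasi-entropy `Φ_{A,B}(M)`. -/
def qentP {n : ℕ} (A B M : Matrix (Fin n) (Fin n) ℝ) : ℝ :=
  -∑ i, ∑ j, ((M * A) i j * (M⁻¹ᵀ * B) i j) * Real.logb 2 |(M * A) i j * (M⁻¹ᵀ * B) i j|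

/-- Summand of the paired potential. -/
def pairS {n : ℕ} (P Q : Matrix (Fin n) (Fin n ⊕ Fin n) ℝ)
    (M : Matrix (Fin n) (Fin n) ℝ) (i j : Fin n) : ℝ :=
  (M * P) i (Sum.inl j) * (M⁻¹ᵀ * Q) i (Sum.inl j) +
    (M * P) i (Sum.inr j) * (M⁻¹ᵀ * Q) i (Sum.inr j)

/-- Paired potential `Φ̂_{P,Q}(M)` for preconditioners `P Q : n × 2n`. -/
def pairedPot {n : ℕ} (P Q : Matrix (Fin n) (Fin n ⊕ Fin n) ℝ)
    (M : Matrix (Fin n) (Fin n) ℝ) : ℝ :=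
  -∑ i, ∑ j, pairS P Q M i j * Real.logb 2 |pairS P Q M i j|

/-- Planar rotation matrix `R_{i,i',θ}`. -/
def rotMat {n : ℕ} (i i' : Fin n) (θ : ℝ) : Matrix (Fin n) (Fin n) ℝ :=
  Matrix.of fun a b =>
    if a = i ∧ b = i then Real.cos θ
    else if a = i ∧ b = i' then Real.sin θ
    else if a = i' ∧ b = i then -Real.sin θ
    else if a = i' ∧ b = i' then Real.cos θ
    else if a = b then 1 else 0

/-- Spectral norm (ℓ₂ operator norm) of a square real matrix. -/
def specNorm {n : ℕ} (M : Matrix (Fin n) (Fin n) ℝ) : ℝ :=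
  ‖LinearMap.toContinuousLinearMap (Matrix.toEuclideanLin M)‖

/-- Condition number `κ(M) = ‖M‖₂ ‖M⁻¹‖₂`. -/
def condNum {n : ℕ} (M : Matrix (Fin n) (Fin n) ℝ) : ℝ :=
  specNorm M * specNorm M⁻¹

/-- Singular values: square roots of eigenvalues of `Mᴴ M` (= `Mᵀ M` over ℝ). -/
def singVals {n : ℕ} (M : Matrix (Fin n) (Fin n) ℝ) (i : Fin n) : ℝ :=
  Real.sqrt ((Matrix.isHermitian_conjTranspose_mul_self M).eigenvalues i)

/-- Rotation step of the linear algebraic model. -/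
def IsRotStep {n : ℕ} (M M' : Matrix (Fin n) (Fin n) ℝ) : Prop :=
  ∃ (i i' : Fin n) (θ : ℝ), i < i' ∧ M' = rotMat i i' θ * M

/-- Constant gate: one row is multiplied by a nonzero constant. -/
def IsConstGate {n : ℕ} (M M' : Matrix (Fin n) (Fin n) ℝ) : Prop :=
  ∃ (r : Fin n) (c : ℝ), c ≠ 0 ∧ M' = Matrix.updateRow M r (c • M r)

/-- A single step of a linear algebraic algorithm. -/
def IsStep {n : ℕ} (M M' : Matrix (Fin n) (Fin n) ℝ) : Prop :=
  IsRotStep M M' ∨ IsConstGate M M'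

/-- `A` is an `m`-step linear algebraic algorithm. -/
def IsAlgorithm {n : ℕ} (m : ℕ) (A : ℕ → Matrix (Fin n) (Fin n) ℝ) : Prop :=
  A 0 = 1 ∧ ∀ t < m, IsStep (A t) (A (t+1))

/-- The algorithm is uniformly `κ`-well conditioned. -/
def WellConditioned {n : ℕ} (m : ℕ) (A : ℕ → Matrix (Fin n) (Fin n) ℝ) (κ : ℝ) : Prop :=
  ∀ t ≤ m, IsUnit (A t).det ∧ condNum (A t) ≤ κ

end



noncomputable section AuxProof

-- bit helper lemmas
lemma bit_le_one (x b : ℕ) : (x >>> b) % 2 ≤ 1 := Nat.lt_succ_iff.mp (Nat.mod_lt _ (by norm_num))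

lemma bit_eq_testBit (x b : ℕ) : (x >>> b) % 2 = if x.testBit b then 1 else 0 := by
  rw [Nat.testBit_eq_decide_div_mod_eq, Nat.shiftRight_eq_div_pow]
  rcases Nat.mod_two_eq_zero_or_one (x / 2^b) with h | h <;> simp [h]

lemma bit_xor_pow (x b b' : ℕ) :
    ((x ^^^ 2^b) >>> b') % 2 = if b' = b then 1 - (x >>> b') % 2 else (x >>> b') % 2 := by
  rw [bit_eq_testBit, bit_eq_testBit, Nat.testBit_xor, Nat.testBit_two_pow]
  by_cases h : b' = b
  · simp [h]
    rcases Nat.testBit x b with _ | _ <;> simp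
  · simp [h, Ne.symm h]

lemma exists_diff_bit {k : ℕ} {i i' : ℕ} (hi : i < 2^k) (hi' : i' < 2^k) (h : i ≠ i') :
    ∃ b < k, (i >>> b) % 2 ≠ (i' >>> b) % 2 := by
  by_contra hc
  push_neg at hc
  apply h
  apply Nat.eq_of_testBit_eq
  intro b
  by_cases hb : b < k
  · have := hc b hb
    rw [bit_eq_testBit, bit_eq_testBit] at this
    rcases Bool.eq_false_or_eq_true (i.testBit b) with h1 | h1 <;>
      rcases Bool.eq_false_or_eq_true (i'.testBit b) with h2 | h2 <;> simp_all
  · rw [Nat.testBit_lt_two_pow (lt_of_lt_of_le hi (Nat.pow_le_pow_right (by norm_num) (le_of_not_gt hb))),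
       Nat.testBit_lt_two_pow (lt_of_lt_of_le hi' (Nat.pow_le_pow_right (by norm_num) (le_of_not_gt hb)))]

lemma key_sum (k : ℕ) (i i' : Fin (2^k)) (b : ℕ) (hb : b < k)
    (hdiff : (i.val >>> b) % 2 ≠ (i'.val >>> b) % 2) :
    ∑ j : Fin (2^k), ((-1:ℝ) ^ (∑ b' ∈ Finset.range k,
      ((i.val >>> b') % 2 + (i'.val >>> b') % 2) * ((j.val >>> b') % 2))) = 0 := by
  set A : Fin (2^k) → ℕ := fun j => ∑ b' ∈ Finset.range k,
      ((i.val >>> b') % 2 + (i'.val >>> b') % 2) * ((j.val >>> b') % 2) with hA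
  have h2b : (2:ℕ)^b < 2^k := Nat.pow_lt_pow_right (by norm_num) hb
  set g : Fin (2^k) → Fin (2^k) := fun j => ⟨j.val ^^^ 2^b, Nat.xor_lt_two_pow j.isLt h2b⟩ with hg
  apply Finset.sum_ninvolution g
  · -- f a + f (g a) = 0
    intro j
    have hodd : Odd (A j + A (g j)) := by
      have : A j + A (g j) = ∑ b' ∈ Finset.range k,
          ((i.val >>> b') % 2 + (i'.val >>> b') % 2) *
            ((j.val >>> b') % 2 + ((j.val ^^^ 2^b) >>> b') % 2) := by
        rw [hA, ← Finset.sum_add_distrib]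
        exact Finset.sum_congr rfl fun b' _ => by ring
      rw [this, ← Finset.add_sum_erase _ _ (Finset.mem_range.mpr hb)]
      apply Odd.add_even
      · -- the b-term is odd
        rw [bit_xor_pow, if_pos rfl]
        have h1 := bit_le_one j.val b
        have h2 := bit_le_one i.val b
        have h3 := bit_le_one i'.val b
        have : (j.val >>> b) % 2 + (1 - (j.val >>> b) % 2) = 1 := by omega
        have hxy : (i.val >>> b) % 2 + (i'.val >>> b) % 2 = 1 := by omega
        rw [this, mul_one, hxy]
        exact odd_one
      · apply Finset.even_sum
        intro b' hb'
        have hb'b : b' ≠ b := Finset.ne_of_mem_erase hb'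
        rw [bit_xor_pow, if_neg hb'b]
        exact ⟨((i.val >>> b') % 2 + (i'.val >>> b') % 2) * ((j.val >>> b') % 2), by ring⟩
    have h1 : (A j + A (g j)) % 2 = 1 := Nat.odd_iff.mp hodd
    rcases Nat.even_or_odd (A j) with he | ho
    · have h2 : A (g j) % 2 = 1 := by have := Nat.even_iff.mp he; omega
      rw [he.neg_one_pow, (Nat.odd_iff.mpr h2).neg_one_pow]; ring
    · have h2 : A (g j) % 2 = 0 := by have := Nat.odd_iff.mp ho; omega
      rw [ho.neg_one_pow, (Nat.even_iff.mpr h2).neg_one_pow]; ring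
  · intro j _
    intro hgj
    have : j.val ^^^ 2^b = j.val := congrArg Fin.val hgj
    have h0 : (2:ℕ)^b ≠ 0 := Nat.pos_iff_ne_zero.mp (Nat.pow_pos (by norm_num))
    apply h0
    have h2 := congrArg (fun t => j.val ^^^ t) this
    simpa [← Nat.xor_assoc] using h2
  · intro a; exact Finset.mem_univ _
  · intro j
    apply Fin.ext
    show (j.val ^^^ 2^b) ^^^ 2^b = j.val
    rw [Nat.xor_assoc, Nat.xor_self, Nat.xor_zero]

lemma WH_transpose (k : ℕ) : (WH k)ᵀ = WH k := by
  ext i j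
  simp only [Matrix.transpose_apply, WH]
  congr 1
  congr 1
  exact Finset.sum_congr rfl fun b _ => Nat.mul_comm _ _

lemma sqrtN_pos (k : ℕ) : (0:ℝ) < Real.sqrt (2^k) :=
  Real.sqrt_pos.mpr (by positivity)

lemma WH_mul_WH (k : ℕ) : WH k * WH k = 1 := by
  ext i i'
  rw [Matrix.mul_apply]
  have hS : ∀ j : Fin (2^k), WH k i j * WH k j i' =
      ((-1:ℝ) ^ (∑ b ∈ Finset.range k,
        ((i.val >>> b) % 2 + (i'.val >>> b) % 2) * ((j.val >>> b) % 2))) / (2^k : ℝ) := by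
    intro j
    simp only [WH]
    rw [div_mul_div_comm, Real.mul_self_sqrt (by positivity), ← pow_add]
    congr 1
    rw [← Finset.sum_add_distrib]
    congr 1
    exact Finset.sum_congr rfl fun b _ => by ring
  simp only [hS]
  rw [← Finset.sum_div]
  by_cases h : i = i'
  · subst h
    have : ∀ j : Fin (2^k), ((-1:ℝ) ^ (∑ b ∈ Finset.range k,
        ((i.val >>> b) % 2 + (i.val >>> b) % 2) * ((j.val >>> b) % 2))) = 1 := by
      intro j
      apply Even.neg_one_pow
      apply Finset.even_sum
      intro b _
      exact ⟨(i.val >>> b % 2) * (j.val >>> b % 2), by ring⟩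
    simp only [this, Finset.sum_const, Finset.card_univ, Fintype.card_fin, nsmul_eq_mul, mul_one]
    rw [Matrix.one_apply_eq]
    push_cast
    rw [div_self (by positivity)]
  · obtain ⟨b, hb, hdiff⟩ := exists_diff_bit i.isLt i'.isLt (fun hc => h (Fin.ext hc))
    rw [key_sum k i i' b hb hdiff, zero_div, Matrix.one_apply_ne h]

lemma pert_inv (k : ℕ) (ε : ℝ) (hε : 1 - ε^2 ≠ 0) :
    (1 + ε • WH k)⁻¹ = (1 - ε^2)⁻¹ • (1 - ε • WH k) := by
  apply Matrix.inv_eq_right_inv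
  rw [Matrix.mul_smul]
  have : (1 + ε • WH k) * (1 - ε • WH k) = (1 - ε^2) • (1 : Matrix (Fin (2^k)) (Fin (2^k)) ℝ) := by
    rw [Matrix.mul_sub, Matrix.add_mul, Matrix.add_mul, Matrix.mul_one, Matrix.one_mul,
      Matrix.smul_mul, Matrix.mul_smul, Matrix.smul_mul, Matrix.mul_one, WH_mul_WH, smul_smul,
      sub_smul, one_smul, ← sq]
    abel
  rw [this, smul_smul, inv_mul_cancel₀ hε, one_smul]

lemma pert_invT_mul (k : ℕ) (ε : ℝ) (hε : 1 - ε^2 ≠ 0) :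
    ((1 + ε • WH k)⁻¹)ᵀ * WH k = (1 - ε^2)⁻¹ • (WH k - ε • 1) := by
  rw [pert_inv k ε hε, Matrix.transpose_smul, Matrix.transpose_sub, Matrix.transpose_one,
    Matrix.transpose_smul, WH_transpose, Matrix.smul_mul, Matrix.sub_mul, Matrix.one_mul,
    Matrix.smul_mul, WH_mul_WH]

lemma M_apply (k : ℕ) (ε : ℝ) (i j : Fin (2^k)) :
    ((1 + ε • WH k) * (1 : Matrix (Fin (2^k)) (Fin (2^k)) ℝ) : Matrix (Fin (2^k)) (Fin (2^k)) ℝ) i j = (if i = j then (1:ℝ) else 0) + ε * WH k i j := by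
  rw [Matrix.mul_one]
  simp [Matrix.add_apply, Matrix.smul_apply, Matrix.one_apply, smul_eq_mul]

lemma Ninv_apply (k : ℕ) (ε : ℝ) (hε : 1 - ε^2 ≠ 0) (i j : Fin (2^k)) :
    ((((1 + ε • WH k)⁻¹)ᵀ * WH k : Matrix (Fin (2^k)) (Fin (2^k)) ℝ)) i j
      = (1 - ε^2)⁻¹ * (WH k i j - ε * (if i = j then (1:ℝ) else 0)) := by
  rw [pert_invT_mul k ε hε]
  simp [Matrix.smul_apply, Matrix.sub_apply, Matrix.one_apply, smul_eq_mul]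

lemma WH_abs (k : ℕ) (i j : Fin (2^k)) : |WH k i j| = 1 / Real.sqrt (2^k) := by
  rw [WH, abs_div, abs_pow, abs_neg, abs_one, one_pow,
    abs_of_pos (Real.sqrt_pos.mpr (by positivity))]

lemma WH_sq (k : ℕ) (i j : Fin (2^k)) : WH k i j ^ 2 = 1 / (2^k : ℝ) := by
  rw [← sq_abs, WH_abs, div_pow, one_pow, Real.sq_sqrt (by positivity)]

lemma logb_two_pow (k : ℕ) : Real.logb 2 ((2:ℝ)^k) = k := by
  rw [← Real.rpow_natCast 2 k, Real.logb_rpow (by norm_num) (by norm_num)]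

lemma diag_bound (p u : ℝ) (hu : 0 < u) (hu1 : u ≤ 1) (hp : |p| ≤ u) :
    p * Real.logb 2 |p| ≤ 5/3 * u + u * Real.logb 2 (1/u) := by
  have hlogu : 0 ≤ Real.logb 2 (1/u) :=
    Real.logb_nonneg (by norm_num) (by rw [le_div_iff₀ hu]; linarith)
  rcases eq_or_lt_of_le (abs_nonneg p) with h0 | h0
  · rw [← h0]
    have : p = 0 := abs_eq_zero.mp h0.symm
    rw [this, zero_mul]
    positivity
  set t := |p| with ht
  have htu : t ≤ u := hp
  have ht1 : t ≤ 1 := le_trans htu hu1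
  have hlt : Real.logb 2 t ≤ 0 := Real.logb_nonpos (by norm_num : (1:ℝ) < 2) (abs_nonneg p) ht1
  have step1 : p * Real.logb 2 t ≤ t * (- Real.logb 2 t) := by
    calc p * Real.logb 2 t ≤ |p * Real.logb 2 t| := le_abs_self _
    _ = t * |Real.logb 2 t| := by rw [abs_mul]
    _ = t * (- Real.logb 2 t) := by rw [abs_of_nonpos hlt]
  have hlog2 : (3:ℝ)/5 ≤ Real.log 2 := by
    have := Real.log_two_gt_d9; linarith
  have hlog2pos : (0:ℝ) < Real.log 2 := by linarith
  have split : - Real.logb 2 t = Real.logb 2 (u/t) + Real.logb 2 (1/u) := by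
    rw [Real.logb_div (ne_of_gt hu) (ne_of_gt h0), one_div, Real.logb_inv]
    ring
  have bound1 : t * Real.logb 2 (u/t) ≤ 5/3 * u := by
    have h1 : Real.log (u/t) ≤ u/t - 1 := Real.log_le_sub_one_of_pos (by positivity)
    have h2 : t * Real.log (u/t) ≤ u - t := by
      have := mul_le_mul_of_nonneg_left h1 (le_of_lt h0)
      calc t * Real.log (u/t) ≤ t * (u/t - 1) := this
      _ = u - t := by field_simp
    rw [Real.logb]
    rw [← mul_div_assoc, div_le_iff₀ hlog2pos]
    nlinarith
  have bound2 : t * Real.logb 2 (1/u) ≤ u * Real.logb 2 (1/u) :=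
    mul_le_mul_of_nonneg_right htu hlogu
  calc p * Real.logb 2 t ≤ t * (- Real.logb 2 t) := step1
  _ = t * Real.logb 2 (u/t) + t * Real.logb 2 (1/u) := by rw [split]; ring
  _ ≤ 5/3 * u + u * Real.logb 2 (1/u) := add_le_add bound1 bound2

end AuxProof

set_option maxHeartbeats 1000000 in
/-- `Φ_{Id,F}(Id + εF) ≥ c ε n log₂ n` for `n^{-α} ≤ ε ≤ α`. -/
theorem qentP_perturbation_lower :
    ∃ α ∈ Set.Ioo (0:ℝ) (1/2), ∃ c > (0:ℝ), ∃ n₀ : ℕ,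
      ∀ k : ℕ, n₀ ≤ 2^k → ∀ ε : ℝ, ((2^k : ℝ)) ^ (-α) ≤ ε → ε ≤ α →
        c * ε * 2^k * Real.logb 2 (2^k) ≤ qentP 1 (WH k) (1 + ε • WH k) := by
  refine ⟨1/10, ⟨by norm_num, by norm_num⟩, 1/10, by norm_num, 2^50, ?_⟩
  intro k hk ε hε1 hε2
  have hk50 : 50 ≤ k := (Nat.pow_le_pow_iff_right (by norm_num : 1 < 2)).mp hk
  set N : ℝ := (2:ℝ)^k with hN
  have hNpos : (0:ℝ) < N := by positivity
  have hN1 : (1:ℝ) ≤ N := one_le_pow₀ (by norm_num)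
  have hN2 : (2:ℝ) ≤ N := by
    calc (2:ℝ) = 2^1 := (pow_one 2).symm
    _ ≤ 2^k := pow_le_pow_right₀ (by norm_num) (by omega)
  have hεpos : 0 < ε := lt_of_lt_of_le (Real.rpow_pos_of_pos hNpos _) hε1
  have hε10 : ε ≤ 1/10 := hε2
  have h1me : (1:ℝ)/2 ≤ 1 - ε^2 := by nlinarith
  have hcne : 1 - ε^2 ≠ 0 := by nlinarith
  set cinv : ℝ := (1 - ε^2)⁻¹ with hcinv
  have hcinv_pos : 0 < cinv := by positivity
  have hcinv1 : 1 ≤ cinv := by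
    rw [hcinv, le_inv_comm₀ (by norm_num) (by nlinarith)]; nlinarith
  have hcinv2 : cinv ≤ 2 := by
    rw [hcinv, inv_le_comm₀ (by nlinarith) (by norm_num)]; nlinarith
  -- 1/sqrt N ≤ ε
  have hsqrt : 1 / Real.sqrt N ≤ ε := by
    have h1 : Real.sqrt N = N ^ ((1:ℝ)/2) := Real.sqrt_eq_rpow N
    have h2 : N ^ (-(1:ℝ)/2) ≤ N ^ (-(1/10):ℝ) :=
      Real.rpow_le_rpow_of_exponent_le hN1 (by norm_num)
    calc 1 / Real.sqrt N = N ^ (-(1:ℝ)/2) := by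
          rw [h1, one_div, ← Real.rpow_neg hNpos.le]; norm_num
    _ ≤ N ^ (-(1/10):ℝ) := h2
    _ ≤ ε := by
          have : -(1/10 : ℝ) = -(1/10) := rfl
          exact le_trans (le_of_eq (by norm_num)) hε1
  -- logb 2 (1/ε) ≤ k/10
  have hlogeps : Real.logb 2 (1/ε) ≤ (k:ℝ)/10 := by
    have h1 : (1:ℝ)/ε ≤ N ^ ((1/10):ℝ) := by
      rw [div_le_iff₀ hεpos]
      have := mul_le_mul_of_nonneg_left hε1 (le_of_lt (Real.rpow_pos_of_pos hNpos ((1/10):ℝ)))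
      calc (1:ℝ) = N ^ ((1/10):ℝ) * N ^ (-(1/10):ℝ) := by
            rw [← Real.rpow_add hNpos]; norm_num
      _ ≤ N ^ ((1/10):ℝ) * ε := this
    calc Real.logb 2 (1/ε) ≤ Real.logb 2 (N ^ ((1/10):ℝ)) :=
          Real.logb_le_logb_of_le (by norm_num) (by positivity) h1
    _ = (1/10) * Real.logb 2 N := Real.logb_rpow_eq_mul_logb_of_pos hNpos
    _ = (k:ℝ)/10 := by rw [hN, logb_two_pow]; ring
  set M := 1 + ε • WH k with hM
  set f : Fin (2^k) → Fin (2^k) → ℝ := fun i j =>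
    ((M * (1 : Matrix (Fin (2^k)) (Fin (2^k)) ℝ)) i j * (M⁻¹ᵀ * WH k) i j) *
      Real.logb 2 |(M * (1 : Matrix (Fin (2^k)) (Fin (2^k)) ℝ)) i j * (M⁻¹ᵀ * WH k) i j| with hf
  have hqent : qentP 1 (WH k) M = -∑ i, ∑ j, f i j := rfl
  set q : ℝ := ε * cinv / N with hq
  have hqpos : 0 < q := by positivity
  -- off diagonal value
  have hoffval : ∀ i j : Fin (2^k), i ≠ j →
      (M * (1 : Matrix (Fin (2^k)) (Fin (2^k)) ℝ)) i j * (M⁻¹ᵀ * WH k) i j = q := by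
    intro i j hij
    rw [hM, M_apply, Ninv_apply k ε hcne, if_neg hij]
    have hsq := WH_sq k i j
    calc (0 + ε * WH k i j) * ((1-ε^2)⁻¹ * (WH k i j - ε * 0))
        = ε * cinv * (WH k i j ^ 2) := by rw [hcinv]; ring
    _ = ε * cinv * (1/(2^k:ℝ)) := by rw [hsq]
    _ = q := by rw [hq, hN]; ring
  -- off diagonal term bound
  have hoff : ∀ i j : Fin (2^k), i ≠ j → f i j ≤ ε / N * (-(k:ℝ)) := by
    intro i j hij
    rw [hf]
    simp only
    rw [hoffval i j hij, abs_of_pos hqpos]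
    have hq_low : ε / N ≤ q := by
      rw [hq, div_le_div_iff_of_pos_right hNpos]  -- may not exist
      nlinarith
    have hq_hi : q ≤ 1/N := by
      rw [hq, div_le_div_iff_of_pos_right hNpos]
      nlinarith
    have hlogq : Real.logb 2 q ≤ -(k:ℝ) := by
      calc Real.logb 2 q ≤ Real.logb 2 (1/N) :=
            Real.logb_le_logb_of_le (by norm_num) hqpos hq_hi
      _ = -(k:ℝ) := by rw [one_div, Real.logb_inv, hN, logb_two_pow]
    calc q * Real.logb 2 q ≤ q * (-(k:ℝ)) := mul_le_mul_of_nonneg_left hlogq hqpos.le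
    _ ≤ ε / N * (-(k:ℝ)) := mul_le_mul_of_nonpos_right hq_low (neg_nonpos.mpr (Nat.cast_nonneg k))
  -- diagonal bound
  have hdiag : ∀ i : Fin (2^k), f i i ≤ 5*ε + 3/10 * ε * (k:ℝ) := by
    intro i
    rw [hf]
    simp only
    set P := (M * (1 : Matrix (Fin (2^k)) (Fin (2^k)) ℝ)) i i * (M⁻¹ᵀ * WH k) i i with hP
    have hPval : P = ((1:ℝ) + ε * WH k i i) * (cinv * (WH k i i - ε)) := by
      rw [hP, hM, M_apply, Ninv_apply k ε hcne, if_pos rfl, hcinv]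
      ring
    have hW : |WH k i i| ≤ ε := by
      rw [WH_abs]
      exact hsqrt
    have habs : |P| ≤ 3*ε := by
      rw [hPval, abs_mul, abs_mul]
      have h1 : |(1:ℝ) + ε * WH k i i| ≤ 1 + ε*ε := by
        calc |(1:ℝ) + ε * WH k i i| ≤ |(1:ℝ)| + |ε * WH k i i| := abs_add_le _ _
        _ ≤ 1 + ε*ε := by
              rw [abs_one, abs_mul, abs_of_pos hεpos]
              nlinarith
      have h2 : |WH k i i - ε| ≤ 2*ε := by
        calc |WH k i i - ε| ≤ |WH k i i| + |ε| := abs_sub _ _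
        _ ≤ 2*ε := by rw [abs_of_pos hεpos]; linarith
      rw [abs_of_pos hcinv_pos]
      have hcinv3 : cinv ≤ 100/99 := by
        rw [hcinv, inv_le_comm₀ (by nlinarith) (by norm_num)]
        nlinarith
      have hs1 : cinv * |WH k i i - ε| ≤ (100/99) * (2*ε) :=
        mul_le_mul hcinv3 h2 (abs_nonneg _) (by norm_num)
      calc |(1:ℝ) + ε * WH k i i| * (cinv * |WH k i i - ε|)
          ≤ (1 + ε*ε) * ((100/99) * (2*ε)) :=
            mul_le_mul h1 hs1 (by positivity) (by nlinarith)
      _ ≤ 3*ε := by nlinarith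
    have hdb := diag_bound P (3*ε) (by linarith) (by linarith) habs
    have hmono : Real.logb 2 (1/(3*ε)) ≤ Real.logb 2 (1/ε) :=
      Real.logb_le_logb_of_le (by norm_num) (by positivity)
        (by rw [div_le_div_iff₀ (by linarith) hεpos]; nlinarith)
    have hl : Real.logb 2 (1/(3*ε)) ≤ (k:ℝ)/10 := le_trans hmono hlogeps
    have hfin : (3*ε) * Real.logb 2 (1/(3*ε)) ≤ (3*ε) * ((k:ℝ)/10) :=
      mul_le_mul_of_nonneg_left hl (by linarith)
    linarith
  -- row bound
  have hrow : ∀ i : Fin (2^k),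
      ∑ j, f i j ≤ (5*ε + 3/10*ε*(k:ℝ)) + (N - 1) * (ε/N * (-(k:ℝ))) := by
    intro i
    rw [← Finset.add_sum_erase _ _ (Finset.mem_univ i)]
    apply add_le_add (hdiag i)
    calc ∑ j ∈ univ.erase i, f i j ≤ ∑ _j ∈ univ.erase i, (ε/N * (-(k:ℝ))) :=
          Finset.sum_le_sum fun j hj => hoff i j (Ne.symm (Finset.ne_of_mem_erase hj))
    _ = ((2^k - 1 : ℕ) : ℝ) * (ε/N * (-(k:ℝ))) := by
          rw [Finset.sum_const, Finset.card_erase_of_mem (Finset.mem_univ i), Finset.card_univ,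
            Fintype.card_fin, nsmul_eq_mul]
    _ = (N - 1) * (ε/N * (-(k:ℝ))) := by
          rw [Nat.cast_sub Nat.one_le_two_pow, Nat.cast_pow, Nat.cast_one, Nat.cast_ofNat, hN]
  have htot : ∑ i, ∑ j, f i j
      ≤ N * ((5*ε + 3/10*ε*(k:ℝ)) + (N - 1) * (ε/N * (-(k:ℝ)))) := by
    calc ∑ i, ∑ j, f i j
        ≤ ∑ _i : Fin (2^k), ((5*ε + 3/10*ε*(k:ℝ)) + (N-1) * (ε/N * (-(k:ℝ)))) :=
          Finset.sum_le_sum fun i _ => hrow i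
    _ = _ := by
          rw [Finset.sum_const, Finset.card_univ, Fintype.card_fin, nsmul_eq_mul,
            Nat.cast_pow, Nat.cast_ofNat, hN]
  have hK : (50:ℝ) ≤ (k:ℝ) := by exact_mod_cast hk50
  have hexp : N * ((5*ε + 3/10*ε*(k:ℝ)) + (N - 1) * (ε/N * (-(k:ℝ))))
      = 5*ε*N + 3/10*ε*N*(k:ℝ) - ε*N*(k:ℝ) + ε*(k:ℝ) := by
    field_simp
    ring
  rw [hqent, le_neg]
  rw [hN, logb_two_pow]
  refine le_trans htot ?_
  rw [hexp]
  nlinarith [mul_nonneg (mul_nonneg hεpos.le hNpos.le) (sub_nonneg.mpr hK),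
    mul_nonneg (mul_nonneg hεpos.le (Nat.cast_nonneg k)) (sub_nonneg.mpr hN2)]
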